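/- arXiv:2510.08345 — 2 statements merged into one kernel-verified Lean document; each statement's English description precedes it below -/
import Mathlib

section
/- For s ∈ (0,1), ∫_0^∞ (1 - cos τ) τ^{-1-2s} dτ = cos(πs) Γ(2-2s) / (2s(1-2s)), where for s = 1/2 the right-hand side is interpreted by its continuous extension π/2. -/
open MeasureTheory Real

section aux
open Set Filter Topology
set_option maxHeartbeats 1000000

lemma int_exp (c : ℝ) (hc : 0 < c) : ∫ x in Ioi (0:ℝ), exp (-c * x) = 1 / c := by
  have hderiv : ∀ x ∈ Ici (0:ℝ), HasDerivAt (fun x => -exp (-c * x) / c) (exp (-c * x)) x := by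
    intro x _
    have h1 : HasDerivAt (fun x : ℝ => -c * x) (-c) x := by
      simpa using (hasDerivAt_id x).const_mul (-c)
    have := (h1.exp.neg).div_const c
    convert this using 1
    exacts [rfl, rfl, rfl, by field_simp]
  have hint := exp_neg_integrableOn_Ioi 0 hc
  have htend : Tendsto (fun x => -exp (-c * x) / c) atTop (𝓝 0) := by
    have h2 : Tendsto (fun x : ℝ => -c * x) atTop atBot :=
      tendsto_id.const_mul_atTop_of_neg (by linarith)
    have : Tendsto (fun x : ℝ => exp (-c * x)) atTop (𝓝 0) :=
      tendsto_exp_atBot.comp h2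
    simpa using (this.neg.div_const c)
  have := integral_Ioi_of_hasDerivAt_of_tendsto' hderiv hint htend
  rw [this]
  simp [neg_mul]
  ring

lemma laplace_integrable (t : ℝ) (ht : 0 < t) :
    IntegrableOn (fun τ => (1 - cos τ) * exp (-t * τ)) (Ioi 0) := by
  refine (exp_neg_integrableOn_Ioi 0 ht).const_mul 2 |>.mono' ?_ ?_
  · exact (Continuous.mul (by continuity) (by continuity)).aestronglyMeasurable
  · filter_upwards with τ
    have h1 : |1 - cos τ| ≤ 2 := by
      have := neg_one_le_cos τ; have := cos_le_one τ
      rw [abs_le]; constructor <;> linarith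
    have h2 : (0:ℝ) < exp (-t * τ) := exp_pos _
    calc ‖(1 - cos τ) * exp (-t * τ)‖ = |1 - cos τ| * exp (-t * τ) := by
          rw [norm_mul, Real.norm_eq_abs, Real.norm_eq_abs, abs_of_pos h2]
      _ ≤ 2 * exp (-t * τ) := by nlinarith

lemma laplace_val (t : ℝ) (ht : 0 < t) :
    ∫ τ in Ioi (0:ℝ), (1 - cos τ) * exp (-t * τ) = 1 / (t * (1 + t ^ 2)) := by
  set G : ℝ → ℝ := fun τ => -exp (-t * τ) / t - exp (-t * τ) * (sin τ - t * cos τ) / (1 + t ^ 2)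
    with hG
  have ht2 : (0:ℝ) < 1 + t ^ 2 := by positivity
  have hderiv : ∀ τ ∈ Ici (0:ℝ), HasDerivAt G ((1 - cos τ) * exp (-t * τ)) τ := by
    intro τ _
    have h1 : HasDerivAt (fun τ : ℝ => -t * τ) (-t) τ := by
      simpa using (hasDerivAt_id τ).const_mul (-t)
    have hexp : HasDerivAt (fun τ : ℝ => exp (-t * τ)) (-t * exp (-t * τ)) τ := by
      simpa [mul_comm] using h1.exp
    have h2 : HasDerivAt (fun τ : ℝ => sin τ - t * cos τ)
        (cos τ + t * sin τ) τ := by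
      exact ((hasDerivAt_sin τ).sub ((hasDerivAt_cos τ).const_mul t)).congr_deriv (by ring)
    have h3 := ((hexp.mul h2).div_const (1 + t ^ 2))
    have h4 := (hexp.neg.div_const t)
    have := h4.sub h3
    convert this using 1
    have h5 : exp (-t * τ) * cos τ = (-t * exp (-t * τ) * (sin τ - t * cos τ)
        + exp (-t * τ) * (cos τ + t * sin τ)) / (1 + t ^ 2) := by
      field_simp; ring
    exacts [rfl, rfl, rfl, by field_simp; ring]
  have htend : Tendsto G atTop (𝓝 0) := by
    have hexp0 : Tendsto (fun τ : ℝ => exp (-t * τ)) atTop (𝓝 0) :=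
      tendsto_exp_atBot.comp (tendsto_id.const_mul_atTop_of_neg (by linarith))
    have t1 : Tendsto (fun τ : ℝ => -exp (-t * τ) / t) atTop (𝓝 0) := by
      simpa using hexp0.neg.div_const t
    have t2 : Tendsto (fun τ : ℝ => exp (-t * τ) * (sin τ - t * cos τ) / (1 + t ^ 2))
        atTop (𝓝 0) := by
      have hb : Tendsto (fun τ : ℝ => exp (-t * τ) * (sin τ - t * cos τ)) atTop (𝓝 0) := by
        apply squeeze_zero_norm (a := fun τ => exp (-t * τ) * (1 + |t|))
        · intro τ
          have h1 : |sin τ - t * cos τ| ≤ 1 + |t| := by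
            calc |sin τ - t * cos τ| ≤ |sin τ| + |t * cos τ| := abs_sub _ _
              _ ≤ 1 + |t| := by
                  have := abs_sin_le_one τ
                  have h2 : |t * cos τ| ≤ |t| := by
                    rw [abs_mul]
                    nlinarith [abs_cos_le_one τ, abs_nonneg t]
                  linarith
          calc ‖exp (-t * τ) * (sin τ - t * cos τ)‖
              = exp (-t * τ) * |sin τ - t * cos τ| := by
                rw [norm_mul, Real.norm_eq_abs, Real.norm_eq_abs, abs_of_pos (exp_pos _)]
            _ ≤ exp (-t * τ) * (1 + |t|) := by
                have := (exp_pos (-t * τ)).le; nlinarith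
        · simpa using hexp0.mul_const (1 + |t|)
      simpa using hb.div_const (1 + t ^ 2)
    rw [show (0:ℝ) = 0 - 0 by ring]
    exact t1.sub t2
  rw [integral_Ioi_of_hasDerivAt_of_tendsto' hderiv (laplace_integrable t ht) htend]
  simp only [hG]
  rw [mul_zero, exp_zero, sin_zero, cos_zero]
  field_simp
  ring

lemma rat_integrable {s : ℝ} (hs0 : 0 < s) (hs1 : s < 1) :
    IntegrableOn (fun t : ℝ => t ^ (2 * s - 1) * (1 + t ^ 2)⁻¹) (Ioi 0) := by
  have hmeas : AEStronglyMeasurable (fun t : ℝ => t ^ (2 * s - 1) * (1 + t ^ 2)⁻¹)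
      (volume.restrict (Ioi (0:ℝ))) := by
    apply Measurable.aestronglyMeasurable
    exact (measurable_id.pow_const (2 * s - 1)).mul (((measurable_id.pow_const 2).const_add 1).inv)
  rw [show Ioi (0:ℝ) = Ioc 0 1 ∪ Ioi 1 by rw [Ioc_union_Ioi_eq_Ioi]; norm_num]
  apply IntegrableOn.union
  · -- on (0,1]: bound by t ^ (2s-1)
    have hbase : IntegrableOn (fun t : ℝ => t ^ (2 * s - 1)) (Ioc (0:ℝ) 1) := by
      have := intervalIntegral.intervalIntegrable_rpow' (a := 0) (b := 1)
        (r := 2 * s - 1) (by linarith)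
      rw [intervalIntegrable_iff_integrableOn_Ioc_of_le (by norm_num)] at this
      exact this
    refine hbase.mono' (hmeas.mono_set Ioc_subset_Ioi_self) ?_
    filter_upwards [ae_restrict_mem measurableSet_Ioc] with t ht
    have ht0 : 0 < t := ht.1
    have h1 : (0:ℝ) < 1 + t ^ 2 := by positivity
    rw [Real.norm_eq_abs, abs_mul, abs_of_pos (rpow_pos_of_pos ht0 _), abs_of_pos (inv_pos.2 h1)]
    have h2 : (1 + t ^ 2)⁻¹ ≤ 1 := by
      rw [inv_le_one_iff₀]; right; nlinarith
    nlinarith [rpow_pos_of_pos ht0 (2 * s - 1), (rpow_pos_of_pos ht0 (2 * s - 1)).le]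
  · -- on (1,∞): bound by t ^ (2s-3)
    have hbase : IntegrableOn (fun t : ℝ => t ^ (2 * s - 3)) (Ioi (1:ℝ)) :=
      integrableOn_Ioi_rpow_of_lt (by linarith) one_pos
    refine hbase.mono' (hmeas.mono_set (Ioi_subset_Ioi (by norm_num))) ?_
    filter_upwards [ae_restrict_mem measurableSet_Ioi] with t ht
    have ht1 : 1 < t := ht
    have ht0 : 0 < t := by linarith
    have h1 : (0:ℝ) < 1 + t ^ 2 := by positivity
    rw [Real.norm_eq_abs, abs_mul, abs_of_pos (rpow_pos_of_pos ht0 _), abs_of_pos (inv_pos.2 h1)]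
    have key : t ^ (2 * s - 1) * (1 + t ^ 2)⁻¹ ≤ t ^ (2 * s - 1) * (t ^ 2)⁻¹ := by
      apply mul_le_mul_of_nonneg_left _ (rpow_pos_of_pos ht0 _).le
      apply inv_anti₀ (by positivity) (by nlinarith)
    refine key.trans (le_of_eq ?_)
    rw [← rpow_natCast t 2, ← rpow_neg ht0.le, ← rpow_add ht0]
    congr 1; ring

lemma rat_integral {s : ℝ} (hs0 : 0 < s) (hs1 : s < 1) :
    ∫ t in Ioi (0:ℝ), t ^ (2 * s - 1) * (1 + t ^ 2)⁻¹ = π / (2 * sin (π * s)) := by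
  set f2 : ℝ → ℝ → ℝ := fun u t => t ^ (2 * s - 1) * exp (-(1 + t ^ 2) * u) with hf2
  have hs2 : -1 < 2 * s - 1 := by linarith
  have hmeas : AEStronglyMeasurable (Function.uncurry f2)
      ((volume.restrict (Ioi (0:ℝ))).prod (volume.restrict (Ioi (0:ℝ)))) := by
    apply Measurable.aestronglyMeasurable
    exact (measurable_snd.pow_const (2 * s - 1)).mul
      ((((measurable_snd.pow_const 2).const_add 1).neg.mul measurable_fst).exp)
  -- pointwise rewriting: f2 u t = exp(-u) * (t ^ (2s-1) * exp (-u * t^2))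
  have hsplit : ∀ u t : ℝ, f2 u t = exp (-u) * (t ^ (2 * s - 1) * exp (-u * t ^ 2)) := by
    intro u t
    rw [hf2]
    simp only []
    rw [show -(1 + t ^ 2) * u = -u + -u * t ^ 2 by ring, exp_add]
    ring
  -- integrability in t for fixed u > 0
  have hint_t : ∀ u : ℝ, 0 < u → Integrable (fun t => f2 u t) (volume.restrict (Ioi 0)) := by
    intro u hu
    have := (integrable_rpow_mul_exp_neg_mul_sq hu hs2).restrict (s := Ioi (0:ℝ))
    have h2 := this.const_mul (exp (-u))
    refine h2.congr ?_
    filter_upwards with t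
    rw [hsplit]
  -- value of the inner t-integral for u > 0
  have hval_t : ∀ u : ℝ, 0 < u →
      ∫ t in Ioi (0:ℝ), f2 u t = Gamma s / 2 * (exp (-u) * u ^ ((1 - s) - 1)) := by
    intro u hu
    have : ∫ t in Ioi (0:ℝ), f2 u t
        = ∫ t in Ioi (0:ℝ), exp (-u) * (t ^ (2 * s - 1) * exp (-u * t ^ (2:ℝ))) := by
      refine setIntegral_congr_fun measurableSet_Ioi (fun t ht => ?_)
      rw [hsplit]
      congr 3
      rw [← rpow_natCast t 2]
      norm_num
    rw [this, integral_const_mul, integral_rpow_mul_exp_neg_mul_rpow two_pos hs2 hu]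
    rw [show (2 * s - 1 + 1) / 2 = s by ring, show -(2 * s - 1 + 1) / 2 = (1 - s) - 1 by ring]
    ring
  -- the uncurried function is integrable on the product
  have hprod : Integrable (Function.uncurry f2)
      ((volume.restrict (Ioi (0:ℝ))).prod (volume.restrict (Ioi (0:ℝ)))) := by
    rw [integrable_prod_iff hmeas]
    constructor
    · filter_upwards [ae_restrict_mem measurableSet_Ioi] with u hu
      exact hint_t u hu
    · have hGam := Real.GammaIntegral_convergent (s := 1 - s) (by linarith)
      refine ((hGam.const_mul (Gamma s / 2)).congr ?_)
      filter_upwards [ae_restrict_mem measurableSet_Ioi] with u hu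
      have h1 : ∫ t in Ioi (0:ℝ), ‖f2 u t‖ = ∫ t in Ioi (0:ℝ), f2 u t := by
        refine setIntegral_congr_fun measurableSet_Ioi (fun t ht => ?_)
        rw [Real.norm_eq_abs, abs_of_nonneg]
        have := rpow_nonneg (le_of_lt ht) (2 * s - 1)
        positivity
      simp only [Function.uncurry_apply_pair]
      exact (h1.trans (hval_t u hu)).symm
  -- Fubini
  have hswap := integral_integral_swap hprod
  -- evaluate LHS of swap : ∫ u ∫ t f2 = Γ(s)/2 * Γ(1-s)
  have hLHS : ∫ u in Ioi (0:ℝ), ∫ t in Ioi (0:ℝ), f2 u t = Gamma s / 2 * Gamma (1 - s) := by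
    rw [setIntegral_congr_fun measurableSet_Ioi (fun u hu => hval_t u hu), integral_const_mul,
      ← Real.Gamma_eq_integral (by linarith : (0:ℝ) < 1 - s)]
  -- evaluate RHS of swap : ∫ t ∫ u f2 = J
  have hRHS : ∫ t in Ioi (0:ℝ), ∫ u in Ioi (0:ℝ), f2 u t
      = ∫ t in Ioi (0:ℝ), t ^ (2 * s - 1) * (1 + t ^ 2)⁻¹ := by
    refine setIntegral_congr_fun measurableSet_Ioi (fun t ht => ?_)
    have hc : (0:ℝ) < 1 + t ^ 2 := by positivity
    rw [hf2]
    simp only []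
    rw [integral_const_mul, int_exp _ hc, one_div]
  rw [← hRHS, ← hswap, hLHS]
  -- now use reflection
  rw [show Gamma s / 2 * Gamma (1 - s) = Gamma s * Gamma (1 - s) / 2 by ring,
    Real.Gamma_mul_Gamma_one_sub s]
  rw [div_div]
  ring_nf

lemma main_eq {s : ℝ} (hs0 : 0 < s) (hs1 : s < 1) :
    Gamma (2 * s + 1) * ∫ τ in Ioi (0:ℝ), (1 - cos τ) * τ ^ (-1 - 2 * s)
      = π / (2 * sin (π * s)) := by
  set f1 : ℝ → ℝ → ℝ := fun t τ => t ^ (2 * s) * ((1 - cos τ) * exp (-t * τ)) with hf1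
  have hmeas : AEStronglyMeasurable (Function.uncurry f1)
      ((volume.restrict (Ioi (0:ℝ))).prod (volume.restrict (Ioi (0:ℝ)))) := by
    apply Measurable.aestronglyMeasurable
    exact (measurable_fst.pow_const (2 * s)).mul
      (((measurable_const.sub measurable_snd.cos)).mul
        ((measurable_fst.neg.mul measurable_snd).exp))
  have hnonneg : ∀ t τ : ℝ, 0 < t → 0 ≤ f1 t τ := by
    intro t τ ht
    have h1 : 0 ≤ 1 - cos τ := by have := cos_le_one τ; linarith
    have := (rpow_pos_of_pos ht (2 * s)).le
    positivity
  have hprod : Integrable (Function.uncurry f1)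
      ((volume.restrict (Ioi (0:ℝ))).prod (volume.restrict (Ioi (0:ℝ)))) := by
    rw [integrable_prod_iff hmeas]
    constructor
    · filter_upwards [ae_restrict_mem measurableSet_Ioi] with t ht
      have h := (laplace_integrable t ht).const_mul (t ^ (2 * s))
      exact h
    · refine (rat_integrable hs0 hs1).congr ?_
      filter_upwards [ae_restrict_mem measurableSet_Ioi] with t ht
      have ht0 : (0:ℝ) < t := ht
      have h1 : ∫ τ in Ioi (0:ℝ), ‖f1 t τ‖ = ∫ τ in Ioi (0:ℝ), f1 t τ := by
        refine setIntegral_congr_fun measurableSet_Ioi (fun τ hτ => ?_)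
        rw [Real.norm_eq_abs, abs_of_nonneg (hnonneg t τ ht0)]
      have h2 : ∫ τ in Ioi (0:ℝ), f1 t τ = t ^ (2 * s) * (1 / (t * (1 + t ^ 2))) := by
        rw [hf1]; simp only []
        rw [integral_const_mul, laplace_val t ht0]
      have h3 : t ^ (2 * s - 1) * (1 + t ^ 2)⁻¹ = t ^ (2 * s) * (1 / (t * (1 + t ^ 2))) := by
        rw [show (2:ℝ) * s - 1 = 2 * s + (-1) by ring, rpow_add ht0, rpow_neg_one]
        have h4 : (0:ℝ) < 1 + t ^ 2 := by positivity
        field_simp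
      simp only [Function.uncurry_apply_pair]
      rw [h3, ← h2, ← h1]
  have hswap := integral_integral_swap hprod
  have hLHS : ∫ t in Ioi (0:ℝ), ∫ τ in Ioi (0:ℝ), f1 t τ = π / (2 * sin (π * s)) := by
    rw [← rat_integral hs0 hs1]
    refine setIntegral_congr_fun measurableSet_Ioi (fun t ht => ?_)
    have ht0 : (0:ℝ) < t := ht
    rw [hf1]; simp only []
    rw [integral_const_mul, laplace_val t ht0]
    rw [show (2:ℝ) * s - 1 = 2 * s + (-1) by ring, rpow_add ht0, rpow_neg_one]
    have h4 : (0:ℝ) < 1 + t ^ 2 := by positivity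
    field_simp
  have hRHS : ∫ τ in Ioi (0:ℝ), ∫ t in Ioi (0:ℝ), f1 t τ
      = Gamma (2 * s + 1) * ∫ τ in Ioi (0:ℝ), (1 - cos τ) * τ ^ (-1 - 2 * s) := by
    rw [← integral_const_mul]
    refine setIntegral_congr_fun measurableSet_Ioi (fun τ hτ => ?_)
    have hτ0 : (0:ℝ) < τ := hτ
    have hinner : ∫ t in Ioi (0:ℝ), f1 t τ
        = (1 - cos τ) * ∫ t in Ioi (0:ℝ), t ^ (2 * s) * exp (-τ * t ^ (1:ℝ)) := by
      rw [← integral_const_mul]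
      refine setIntegral_congr_fun measurableSet_Ioi (fun t ht => ?_)
      rw [hf1]; simp only []
      rw [rpow_one]
      ring_nf
    rw [hinner, integral_rpow_mul_exp_neg_mul_rpow one_pos (by linarith) hτ0]
    rw [show (2 * s + 1) / 1 = 2 * s + 1 by ring, show -(2 * s + 1) / 1 = -1 - 2 * s by ring]
    ring
  rw [← hRHS, ← hswap, hLHS]

/-- For `s ∈ (0,1)`, `∫_0^∞ (1 - cos τ) τ^{-1-2s} dτ = cos(πs)Γ(2-2s)/(2s(1-2s))`,
where for `s = 1/2` the right-hand side is interpreted by its continuous extension `π/2`. -/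
theorem stmt5 (s : ℝ) (hs : s ∈ Set.Ioo (0 : ℝ) 1) :
    ∫ τ in Set.Ioi (0 : ℝ), (1 - Real.cos τ) * τ ^ (-1 - 2 * s)
      = if s = 1 / 2 then π / 2
        else Real.cos (π * s) * Real.Gamma (2 - 2 * s) / (2 * s * (1 - 2 * s)) := by
  obtain ⟨hs0, hs1⟩ := hs
  have key := main_eq hs0 hs1
  have hΓpos : 0 < Gamma (2 * s + 1) := Gamma_pos_of_pos (by linarith)
  have hsinpos : 0 < sin (π * s) := by
    apply sin_pos_of_pos_of_lt_pi (by positivity)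
    calc π * s < π * 1 := by
          exact mul_lt_mul_of_pos_left hs1 pi_pos
      _ = π := mul_one π
  have hI : ∫ τ in Ioi (0:ℝ), (1 - cos τ) * τ ^ (-1 - 2 * s)
      = π / (2 * sin (π * s) * Gamma (2 * s + 1)) := by
    have key' : Gamma (2 * s + 1) * (∫ τ in Ioi (0:ℝ), (1 - cos τ) * τ ^ (-1 - 2 * s))
        * (2 * sin (π * s)) = π := by
      rw [key]; field_simp
    rw [eq_div_iff (by positivity)]
    linear_combination key'
  by_cases h : s = 1 / 2
  · rw [if_pos h, hI, h]
    rw [show π * (1/2) = π / 2 by ring, sin_pi_div_two,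
      show (2:ℝ) * (1/2) + 1 = 2 by norm_num, Real.Gamma_two]
    norm_num
  · rw [if_neg h, hI]
    have h2s : (2:ℝ) * s ≠ 0 := by positivity
    have h1m2s : (1:ℝ) - 2 * s ≠ 0 := by
      intro hc; apply h; linarith
    have hΓ2s : 0 < Gamma (2 * s) := Gamma_pos_of_pos (by positivity)
    have hΓ1m : Gamma (1 - 2 * s) ≠ 0 := by
      apply Gamma_ne_zero
      intro m
      rcases m with _ | m
      · simpa using h1m2s
      · intro hc
        have : (m:ℝ) ≥ 0 := Nat.cast_nonneg m
        push_cast at hc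
        linarith
    have hcos : cos (π * s) ≠ 0 := by
      rcases lt_or_gt_of_ne (fun hc => h hc) with hlt | hgt
      · have : 0 < cos (π * s) := by
          apply cos_pos_of_mem_Ioo
          constructor
          · nlinarith [pi_pos]
          · nlinarith [pi_pos]
        linarith
      · have : cos (π * s) < 0 := by
          apply cos_neg_of_pi_div_two_lt_of_lt
          · nlinarith [pi_pos]
          · nlinarith [pi_pos]
        linarith
    have hsin2 : sin (π * (2 * s)) = 2 * sin (π * s) * cos (π * s) := by
      rw [show π * (2 * s) = 2 * (π * s) by ring, sin_two_mul]
    have hrefl := Real.Gamma_mul_Gamma_one_sub (2 * s)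
    rw [hsin2] at hrefl
    have hπ : π = 2 * sin (π * s) * cos (π * s) * (Gamma (2 * s) * Gamma (1 - 2 * s)) := by
      rw [hrefl]
      field_simp
    have hΓa : Gamma (2 * s + 1) = 2 * s * Gamma (2 * s) := Gamma_add_one h2s
    have hΓb : Gamma (2 - 2 * s) = (1 - 2 * s) * Gamma (1 - 2 * s) := by
      rw [show (2:ℝ) - 2 * s = (1 - 2 * s) + 1 by ring]
      exact Gamma_add_one h1m2s
    rw [hΓa, hΓb, div_eq_div_iff (by positivity) (by
      intro hc
      rcases mul_eq_zero.1 hc with h1 | h2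
      · exact h2s h1
      · exact h1m2s h2)]
    linear_combination (2 * s * (1 - 2 * s)) * hπ

end aux
end

section
/- Let σ_s be probability measures on S^{N-1} for s > 0. Then limsup as s → 0+ of max_{e ∈ S^{N-1}} ∫_{S^{N-1}} |e·θ|^{2s} dσ_s(θ) equals 1; in fact lim_{s→0+} max_{e} ∫ |e·θ|^{2s} dσ_s(θ) = 1. -/
open MeasureTheory Filter Metric Set

local notation "⟪" x ", " y "⟫" => @inner ℝ _ _ x y

namespace Stmt9Aux

variable {N : ℕ}

/-- Coordinates are bounded by the norm. -/
lemma abs_coord_le_norm (y : EuclideanSpace ℝ (Fin N)) (i : Fin N) : |y i| ≤ ‖y‖ := by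
  have h := abs_real_inner_le_norm (EuclideanSpace.single i (1 : ℝ)) y
  simpa [EuclideanSpace.inner_single_left] using h

/-- Volume of a slab intersected with the unit ball. -/
lemma slab_vol (hN : 1 ≤ N) (θ : EuclideanSpace ℝ (Fin N)) (hθ : ‖θ‖ = 1)
    {t : ℝ} (ht : 0 ≤ t) :
    volume {x : EuclideanSpace ℝ (Fin N) | x ∈ ball (0 : EuclideanSpace ℝ (Fin N)) 1
        ∧ |⟪θ, x⟫| < t}
      ≤ ENNReal.ofReal (2 * t) * 2 ^ (N - 1) := by
  classical
  set i0 : Fin N := ⟨0, hN⟩ with hi0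
  set e0 : EuclideanSpace ℝ (Fin N) := EuclideanSpace.single i0 (1 : ℝ) with he0def
  have he0 : ‖e0‖ = 1 := by simp [he0def]
  set T := Submodule.reflection (Submodule.span ℝ {θ - e0})ᗮ with hTdef
  have hT : T θ = e0 := Submodule.reflection_sub (by rw [hθ, he0])
  have hset : {x : EuclideanSpace ℝ (Fin N) | x ∈ ball (0 : EuclideanSpace ℝ (Fin N)) 1
        ∧ |⟪θ, x⟫| < t}
      = ⇑T ⁻¹' {y : EuclideanSpace ℝ (Fin N) |
          y ∈ ball (0 : EuclideanSpace ℝ (Fin N)) 1 ∧ |⟪e0, y⟫| < t} := by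
    ext x
    simp only [Set.mem_setOf_eq, Set.mem_preimage, mem_ball_zero_iff]
    rw [T.norm_map, ← hT, T.inner_map_map]
  have hopen : IsOpen {y : EuclideanSpace ℝ (Fin N) |
      y ∈ ball (0 : EuclideanSpace ℝ (Fin N)) 1 ∧ |⟪e0, y⟫| < t} := by
    refine (isOpen_ball).inter ?_
    have : Continuous fun y : EuclideanSpace ℝ (Fin N) => |⟪e0, y⟫| :=
      (continuous_const.inner continuous_id).abs
    exact isOpen_lt this continuous_const
  rw [hset, T.measurePreserving.measure_preimage hopen.measurableSet.nullMeasurableSet]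
  -- the set is contained in a box
  set a : Fin N → ℝ := fun i => if i = i0 then -t else -1 with ha
  set b : Fin N → ℝ := fun i => if i = i0 then t else 1 with hb
  have hsub : {y : EuclideanSpace ℝ (Fin N) |
        y ∈ ball (0 : EuclideanSpace ℝ (Fin N)) 1 ∧ |⟪e0, y⟫| < t}
      ⊆ ⇑(MeasurableEquiv.toLp 2 (Fin N → ℝ)).symm ⁻¹'
          (Set.pi Set.univ fun i => Set.Icc (a i) (b i)) := by
    intro y hy
    obtain ⟨hy1', hy2'⟩ := hy
    have hy1 : ‖y‖ < 1 := mem_ball_zero_iff.mp hy1'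
    have hy2 : |y i0| < t := by
      have h' : ⟪e0, y⟫ = y i0 := by simp [he0def, EuclideanSpace.inner_single_left]
      rwa [h'] at hy2'
    intro i _
    have hcoe : (MeasurableEquiv.toLp 2 (Fin N → ℝ)).symm y i = y i := rfl
    rw [Set.mem_Icc, hcoe]
    by_cases h : i = i0
    · subst h
      simp only [a, b, if_pos rfl]
      exact abs_le.mp hy2.le
    · simp only [a, b, if_neg h]
      have := (abs_coord_le_norm y i).trans hy1.le
      exact abs_le.mp this
  refine (measure_mono hsub).trans ?_
  rw [(EuclideanSpace.volume_preserving_symm_measurableEquiv_toLp (Fin N)).measure_preimage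
      (MeasurableSet.univ_pi fun i => measurableSet_Icc).nullMeasurableSet]
  rw [volume_pi_pi]
  have hfac : ∀ i : Fin N, volume (Set.Icc (a i) (b i))
      = if i = i0 then ENNReal.ofReal (2 * t) else 2 := by
    intro i
    by_cases h : i = i0
    · simp [a, b, h, Real.volume_Icc, two_mul]
    · norm_num [a, b, h, Real.volume_Icc]
  calc ∏ i : Fin N, volume (Set.Icc (a i) (b i))
      = ∏ i : Fin N, (if i = i0 then ENNReal.ofReal (2 * t) else 2) := by
        exact Finset.prod_congr rfl fun i _ => hfac i
    _ = ENNReal.ofReal (2 * t) * 2 ^ (N - 1) := by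
        rw [← Finset.mul_prod_erase Finset.univ _ (Finset.mem_univ i0), if_pos rfl]
        congr 1
        rw [Finset.prod_congr rfl (fun i hi => if_neg (Finset.ne_of_mem_erase hi)),
          Finset.prod_const, Finset.card_erase_of_mem (Finset.mem_univ i0), Finset.card_univ,
          Fintype.card_fin]
    _ ≤ ENNReal.ofReal (2 * t) * 2 ^ (N - 1) := le_rfl

lemma integrand_cont (s : ℝ) (hs : 0 ≤ s) (θ : EuclideanSpace ℝ (Fin N)) :
    Continuous fun x : EuclideanSpace ℝ (Fin N) => |⟪x, θ⟫| ^ (2 * s) :=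
  ((continuous_id.inner continuous_const).abs).rpow_const fun _ => Or.inr (by linarith)

lemma ball_int_lb (hN : 1 ≤ N) {s t : ℝ} (hs : 0 < s) (ht : 0 < t)
    (θ : EuclideanSpace ℝ (Fin N)) (hθ : ‖θ‖ = 1) :
    t ^ (2 * s) * ((volume (ball (0 : EuclideanSpace ℝ (Fin N)) 1)).toReal - 2 ^ N * t)
      ≤ ∫ x in ball (0 : EuclideanSpace ℝ (Fin N)) 1, |⟪x, θ⟫| ^ (2 * s) := by
  set B := ball (0 : EuclideanSpace ℝ (Fin N)) 1 with hB
  set U := {x : EuclideanSpace ℝ (Fin N) | x ∈ B ∧ |⟪θ, x⟫| < t} with hU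
  set A := B \ {x : EuclideanSpace ℝ (Fin N) | |⟪θ, x⟫| < t} with hA
  haveI : IsFiniteMeasure (volume.restrict B) :=
    ⟨by rw [Measure.restrict_apply_univ]; exact measure_ball_lt_top⟩
  have hcont := integrand_cont (N := N) s hs.le θ
  have hnonneg : ∀ x : EuclideanSpace ℝ (Fin N), 0 ≤ |⟪x, θ⟫| ^ (2 * s) :=
    fun x => Real.rpow_nonneg (abs_nonneg _) _
  have hintB : IntegrableOn (fun x => |⟪x, θ⟫| ^ (2 * s)) B volume := by
    refine ⟨hcont.aestronglyMeasurable.restrict, HasFiniteIntegral.of_bounded (C := 1) ?_⟩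
    filter_upwards [ae_restrict_mem measurableSet_ball] with x hx
    have hx1 : ‖x‖ < 1 := mem_ball_zero_iff.mp hx
    have h1 : |⟪x, θ⟫| ≤ 1 := by
      have := abs_real_inner_le_norm x θ
      rw [hθ, mul_one] at this
      exact this.trans hx1.le
    rw [Real.norm_eq_abs, abs_of_nonneg (hnonneg x)]
    exact Real.rpow_le_one (abs_nonneg _) h1 (by linarith)
  have hUmeas : MeasurableSet {x : EuclideanSpace ℝ (Fin N) | |⟪θ, x⟫| < t} :=
    (isOpen_lt ((continuous_const.inner continuous_id).abs) continuous_const).measurableSet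
  have hAsub : A ⊆ B := diff_subset
  have hAfin : volume A ≠ ⊤ := ((measure_mono hAsub).trans_lt measure_ball_lt_top).ne
  have hUfin : volume U ≠ ⊤ :=
    ((measure_mono (fun x hx => hx.1)).trans_lt measure_ball_lt_top).ne
  -- measure of A
  have hcover : B ⊆ A ∪ U := by
    intro x hx
    by_cases h : |⟪θ, x⟫| < t
    · exact Or.inr ⟨hx, h⟩
    · exact Or.inl ⟨hx, h⟩
  have hslab : volume U ≤ ENNReal.ofReal (2 * t) * 2 ^ (N - 1) := slab_vol hN θ hθ ht.le
  have htr : (volume B).toReal ≤ (volume A).toReal + 2 ^ N * t := by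
    have h1 : volume B ≤ volume A + ENNReal.ofReal (2 * t) * 2 ^ (N - 1) :=
      (measure_mono hcover).trans ((measure_union_le A U).trans (add_le_add le_rfl hslab))
    have h2 : (ENNReal.ofReal (2 * t) * 2 ^ (N - 1)).toReal = 2 ^ N * t := by
      rw [ENNReal.toReal_mul, ENNReal.toReal_pow, ENNReal.toReal_ofReal (by linarith),
        ENNReal.toReal_ofNat]
      have : (2 : ℝ) ^ N = 2 * 2 ^ (N - 1) := by
        conv_lhs => rw [show N = (N - 1) + 1 from (Nat.succ_pred_eq_of_pos hN).symm]
        ring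
      rw [this]; ring
    calc (volume B).toReal
        ≤ (volume A + ENNReal.ofReal (2 * t) * 2 ^ (N - 1)).toReal := by
          apply ENNReal.toReal_mono _ h1
          exact ENNReal.add_ne_top.mpr ⟨hAfin,
            ENNReal.mul_ne_top ENNReal.ofReal_ne_top
              (ENNReal.pow_ne_top ENNReal.ofNat_ne_top)⟩
      _ = (volume A).toReal + 2 ^ N * t := by
          rw [ENNReal.toReal_add hAfin
            (ENNReal.mul_ne_top ENNReal.ofReal_ne_top
              (ENNReal.pow_ne_top ENNReal.ofNat_ne_top)), h2]
  have h2 : t ^ (2 * s) * (volume A).toReal ≤ ∫ x in A, |⟪x, θ⟫| ^ (2 * s) := by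
    refine setIntegral_ge_of_const_le_real (measurableSet_ball.diff hUmeas) hAfin ?_
      (hintB.mono_set hAsub)
    intro x hx
    have hxt : t ≤ |⟪x, θ⟫| := by
      have h' : ¬ |⟪θ, x⟫| < t := hx.2
      rw [real_inner_comm] at h'
      exact not_lt.mp h'
    exact Real.rpow_le_rpow ht.le hxt (by linarith)
  have h1 : ∫ x in A, |⟪x, θ⟫| ^ (2 * s) ≤ ∫ x in B, |⟪x, θ⟫| ^ (2 * s) :=
    setIntegral_mono_set hintB (Eventually.of_forall fun x => hnonneg x)
      (HasSubset.Subset.eventuallyLE hAsub)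
  have h0 : t ^ (2 * s) * ((volume B).toReal - 2 ^ N * t)
      ≤ t ^ (2 * s) * (volume A).toReal := by
    apply mul_le_mul_of_nonneg_left _ (Real.rpow_nonneg ht.le _)
    linarith
  linarith

lemma integrable_sph (σ : Measure (Metric.sphere (0 : EuclideanSpace ℝ (Fin N)) 1))
    [IsProbabilityMeasure σ] {s : ℝ} (hs : 0 ≤ s) (x : EuclideanSpace ℝ (Fin N)) :
    Integrable (fun θ : Metric.sphere (0 : EuclideanSpace ℝ (Fin N)) 1 =>
      |⟪x, (θ : EuclideanSpace ℝ (Fin N))⟫| ^ (2 * s)) σ := by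
  refine ⟨(((continuous_const.inner continuous_subtype_val).abs).rpow_const
      fun _ => Or.inr (by linarith)).aestronglyMeasurable,
    HasFiniteIntegral.of_bounded (C := ‖x‖ ^ (2 * s)) ?_⟩
  refine Eventually.of_forall fun θ => ?_
  have hθ : ‖(θ : EuclideanSpace ℝ (Fin N))‖ = 1 := mem_sphere_zero_iff_norm.mp θ.2
  have h1 : |⟪x, (θ : EuclideanSpace ℝ (Fin N))⟫| ≤ ‖x‖ := by
    have := abs_real_inner_le_norm x (θ : EuclideanSpace ℝ (Fin N))
    rwa [hθ, mul_one] at this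
  rw [Real.norm_eq_abs, abs_of_nonneg (Real.rpow_nonneg (abs_nonneg _) _)]
  exact Real.rpow_le_rpow (abs_nonneg _) h1 (by linarith)

lemma fe_le_one (σ : Measure (Metric.sphere (0 : EuclideanSpace ℝ (Fin N)) 1))
    [IsProbabilityMeasure σ] {s : ℝ} (hs : 0 ≤ s) (e : EuclideanSpace ℝ (Fin N))
    (he : ‖e‖ ≤ 1) :
    ∫ θ : Metric.sphere (0 : EuclideanSpace ℝ (Fin N)) 1,
      |⟪e, (θ : EuclideanSpace ℝ (Fin N))⟫| ^ (2 * s) ∂σ ≤ 1 := by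
  have h := norm_integral_le_of_norm_le_const (μ := σ) (C := 1)
    (f := fun θ : Metric.sphere (0 : EuclideanSpace ℝ (Fin N)) 1 =>
      |⟪e, (θ : EuclideanSpace ℝ (Fin N))⟫| ^ (2 * s)) ?_
  · rw [probReal_univ, mul_one, Real.norm_eq_abs] at h
    exact (le_abs_self _).trans h
  · refine Eventually.of_forall fun θ => ?_
    have hθ : ‖(θ : EuclideanSpace ℝ (Fin N))‖ = 1 := mem_sphere_zero_iff_norm.mp θ.2
    have h1 : |⟪e, (θ : EuclideanSpace ℝ (Fin N))⟫| ≤ 1 := by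
      have := abs_real_inner_le_norm e (θ : EuclideanSpace ℝ (Fin N))
      rw [hθ, mul_one] at this
      exact this.trans he
    rw [Real.norm_eq_abs, abs_of_nonneg (Real.rpow_nonneg (abs_nonneg _) _)]
    exact Real.rpow_le_one (abs_nonneg _) h1 (by linarith)

lemma key (hN : 1 ≤ N) (σ : Measure (Metric.sphere (0 : EuclideanSpace ℝ (Fin N)) 1))
    [IsProbabilityMeasure σ] {s t : ℝ} (hs : 0 < s) (ht : 0 < t) :
    t ^ (2 * s) * ((volume (ball (0 : EuclideanSpace ℝ (Fin N)) 1)).toReal - 2 ^ N * t)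
      ≤ (⨆ e : Metric.sphere (0 : EuclideanSpace ℝ (Fin N)) 1,
          ∫ θ : Metric.sphere (0 : EuclideanSpace ℝ (Fin N)) 1,
            |⟪(e : EuclideanSpace ℝ (Fin N)), (θ : EuclideanSpace ℝ (Fin N))⟫| ^ (2 * s) ∂σ)
        * (volume (ball (0 : EuclideanSpace ℝ (Fin N)) 1)).toReal := by
  classical
  set B := ball (0 : EuclideanSpace ℝ (Fin N)) 1 with hBdef
  haveI : IsFiniteMeasure (volume.restrict B) :=
    ⟨by rw [Measure.restrict_apply_univ]; exact measure_ball_lt_top⟩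
  set i0 : Fin N := ⟨0, hN⟩ with hi0
  have he0 : ‖EuclideanSpace.single i0 (1 : ℝ)‖ = 1 := by simp
  haveI hne : Nonempty (Metric.sphere (0 : EuclideanSpace ℝ (Fin N)) 1) :=
    ⟨⟨EuclideanSpace.single i0 (1 : ℝ), mem_sphere_zero_iff_norm.mpr he0⟩⟩
  set f : Metric.sphere (0 : EuclideanSpace ℝ (Fin N)) 1 → ℝ := fun e =>
    ∫ θ : Metric.sphere (0 : EuclideanSpace ℝ (Fin N)) 1,
      |⟪(e : EuclideanSpace ℝ (Fin N)), (θ : EuclideanSpace ℝ (Fin N))⟫| ^ (2 * s) ∂σ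
    with hfdef
  have hbdd : BddAbove (Set.range f) := by
    refine ⟨1, fun y hy => ?_⟩
    obtain ⟨e, rfl⟩ := hy
    exact fe_le_one σ hs.le _ (mem_sphere_zero_iff_norm.mp e.2).le
  set M := ⨆ e, f e with hMdef
  have hM0 : 0 ≤ M :=
    le_trans (integral_nonneg fun θ => Real.rpow_nonneg (abs_nonneg _) _)
      (le_ciSup hbdd (Classical.arbitrary _))
  -- the product function
  set G : EuclideanSpace ℝ (Fin N) × Metric.sphere (0 : EuclideanSpace ℝ (Fin N)) 1 → ℝ :=
    fun p => |⟪p.1, (p.2 : EuclideanSpace ℝ (Fin N))⟫| ^ (2 * s) with hGdef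
  have hGcont : Continuous G :=
    ((continuous_fst.inner (continuous_subtype_val.comp continuous_snd)).abs).rpow_const
      fun _ => Or.inr (by linarith)
  have hprod : (volume.restrict B).prod σ = (volume.prod σ).restrict (B ×ˢ Set.univ) := by
    rw [← Measure.prod_restrict B Set.univ, Measure.restrict_univ]
  have hGint : Integrable G ((volume.restrict B).prod σ) := by
    refine ⟨hGcont.aestronglyMeasurable, HasFiniteIntegral.of_bounded (C := 1) ?_⟩
    rw [hprod]
    filter_upwards [ae_restrict_mem (measurableSet_ball.prod MeasurableSet.univ)] with p hp
    have hx1 : ‖p.1‖ < 1 := mem_ball_zero_iff.mp hp.1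
    have hθ : ‖(p.2 : EuclideanSpace ℝ (Fin N))‖ = 1 := mem_sphere_zero_iff_norm.mp p.2.2
    have h1 : |⟪p.1, (p.2 : EuclideanSpace ℝ (Fin N))⟫| ≤ 1 := by
      have := abs_real_inner_le_norm p.1 (p.2 : EuclideanSpace ℝ (Fin N))
      rw [hθ, mul_one] at this
      exact this.trans hx1.le
    rw [Real.norm_eq_abs, abs_of_nonneg (Real.rpow_nonneg (abs_nonneg _) _)]
    exact Real.rpow_le_one (abs_nonneg _) h1 (by linarith)
  have hswap : ∫ x in B, (∫ θ, G (x, θ) ∂σ) = ∫ θ, (∫ x in B, G (x, θ)) ∂σ :=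
    integral_integral_swap (f := fun x θ => G (x, θ)) hGint
  -- lower bound on the double integral
  have hmarg : Integrable (fun θ : Metric.sphere (0 : EuclideanSpace ℝ (Fin N)) 1 =>
      ∫ x in B, G (x, θ)) σ := hGint.integral_prod_right
  have hlow : t ^ (2 * s) * ((volume B).toReal - 2 ^ N * t)
      ≤ ∫ θ, (∫ x in B, G (x, θ)) ∂σ := by
    have hconst : ∫ _θ : Metric.sphere (0 : EuclideanSpace ℝ (Fin N)) 1,
        (t ^ (2 * s) * ((volume B).toReal - 2 ^ N * t)) ∂σ
        = t ^ (2 * s) * ((volume B).toReal - 2 ^ N * t) := by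
      simp [measure_univ]
    rw [← hconst]
    refine integral_mono (integrable_const _) hmarg fun θ => ?_
    exact ball_int_lb hN hs ht (θ : EuclideanSpace ℝ (Fin N))
      (mem_sphere_zero_iff_norm.mp θ.2)
  -- upper bound
  have hup : ∫ x in B, (∫ θ, G (x, θ) ∂σ) ≤ M * (volume B).toReal := by
    have hC : ∀ x ∈ B, ‖∫ θ, G (x, θ) ∂σ‖ ≤ M := by
      intro x hx
      have hnn : 0 ≤ ∫ θ, G (x, θ) ∂σ :=
        integral_nonneg fun θ => Real.rpow_nonneg (abs_nonneg _) _
      rw [Real.norm_eq_abs, abs_of_nonneg hnn]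
      by_cases hx0 : x = 0
      · subst hx0
        have : ∀ θ : Metric.sphere (0 : EuclideanSpace ℝ (Fin N)) 1, G (0, θ) = 0 := by
          intro θ
          simp [hGdef, Real.zero_rpow (by positivity : 2 * s ≠ 0)]
        simp only [this, integral_zero]
        exact hM0
      · set u : EuclideanSpace ℝ (Fin N) := ‖x‖⁻¹ • x with hudef
        have hxn : (0 : ℝ) < ‖x‖ := norm_pos_iff.mpr hx0
        have hu : ‖u‖ = 1 := by
          rw [hudef, norm_smul, norm_inv, norm_norm]
          field_simp
        have hxu : x = ‖x‖ • u := by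
          rw [hudef, smul_smul]
          rw [mul_inv_cancel₀ hxn.ne', one_smul]
        have hle1 : ∫ θ, G (x, θ) ∂σ ≤ f ⟨u, mem_sphere_zero_iff_norm.mpr hu⟩ := by
          refine integral_mono (integrable_sph σ hs.le x) (integrable_sph σ hs.le u)
            fun θ => ?_
          have hinner : ⟪x, (θ : EuclideanSpace ℝ (Fin N))⟫
              = ‖x‖ * ⟪u, (θ : EuclideanSpace ℝ (Fin N))⟫ := by
            conv_lhs => rw [hxu]
            exact real_inner_smul_left _ _ _
          have habs : |⟪x, (θ : EuclideanSpace ℝ (Fin N))⟫|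
              ≤ |⟪u, (θ : EuclideanSpace ℝ (Fin N))⟫| := by
            rw [hinner, abs_mul, abs_of_nonneg hxn.le]
            exact mul_le_of_le_one_left (abs_nonneg _) (mem_ball_zero_iff.mp hx).le
          exact Real.rpow_le_rpow (abs_nonneg _) habs (by linarith)
        exact hle1.trans (le_ciSup hbdd _)
    have h := norm_setIntegral_le_of_norm_le_const (μ := volume) (s := B)
      (f := fun x => ∫ θ, G (x, θ) ∂σ) measure_ball_lt_top hC
    rw [Real.norm_eq_abs] at h
    exact (le_abs_self _).trans h
  calc t ^ (2 * s) * ((volume B).toReal - 2 ^ N * t)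
      ≤ ∫ θ, (∫ x in B, G (x, θ)) ∂σ := hlow
    _ = ∫ x in B, (∫ θ, G (x, θ) ∂σ) := hswap.symm
    _ ≤ M * (volume B).toReal := hup

end Stmt9Aux

/-- If `σ_s` is a family of probability measures on `S^{N-1}` (for `s > 0`), then
`max_{e} ∫ |e·θ|^{2s} dσ_s(θ) → 1` as `s → 0⁺`. -/
theorem stmt9 (N : ℕ) (hN : 1 ≤ N)
    (σ : ℝ → Measure (Metric.sphere (0 : EuclideanSpace ℝ (Fin N)) 1))
    (hσ : ∀ s, 0 < s → IsProbabilityMeasure (σ s)) :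
    Tendsto
      (fun s : ℝ => ⨆ e : Metric.sphere (0 : EuclideanSpace ℝ (Fin N)) 1,
        ∫ θ, |(inner ℝ (e : EuclideanSpace ℝ (Fin N)) (θ : EuclideanSpace ℝ (Fin N)) : ℝ)| ^ (2 * s)
          ∂(σ s))
      (nhdsWithin 0 (Set.Ioi 0)) (nhds 1) := by
  classical
  set L : ℝ → ℝ := fun s : ℝ => ⨆ e : Metric.sphere (0 : EuclideanSpace ℝ (Fin N)) 1,
    ∫ θ, |(inner ℝ (e : EuclideanSpace ℝ (Fin N)) (θ : EuclideanSpace ℝ (Fin N)) : ℝ)| ^ (2 * s)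
      ∂(σ s) with hL
  set Vr := (volume (ball (0 : EuclideanSpace ℝ (Fin N)) 1)).toReal with hVrdef
  have hVr0 : 0 < Vr :=
    ENNReal.toReal_pos (measure_ball_pos volume _ one_pos).ne' measure_ball_lt_top.ne
  haveI hne : Nonempty (Metric.sphere (0 : EuclideanSpace ℝ (Fin N)) 1) :=
    ⟨⟨EuclideanSpace.single (⟨0, hN⟩ : Fin N) (1 : ℝ),
      mem_sphere_zero_iff_norm.mpr (by simp)⟩⟩
  refine tendsto_order.2 ⟨?_, ?_⟩
  · intro a ha
    set b := max a (1 / 2) with hbdef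
    have hb1 : b < 1 := max_lt ha (by norm_num)
    have hb0 : (0 : ℝ) < b := lt_of_lt_of_le (by norm_num) (le_max_right _ _)
    set t := min 1 ((1 - b) * Vr / (2 * 2 ^ N)) with htdef
    have hb1' : (0:ℝ) < 1 - b := by linarith
    have ht0 : 0 < t := lt_min one_pos (by positivity)
    have h2N : (0 : ℝ) < 2 ^ N := by positivity
    have ht2 : 2 ^ N * t ≤ (1 - b) / 2 * Vr := by
      have h' : t ≤ (1 - b) * Vr / (2 * 2 ^ N) := min_le_right _ _
      calc 2 ^ N * t ≤ 2 ^ N * ((1 - b) * Vr / (2 * 2 ^ N)) := by nlinarith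
        _ = (1 - b) / 2 * Vr := by field_simp
    have hfrac : (1 + b) / 2 ≤ (Vr - 2 ^ N * t) / Vr := by
      rw [le_div_iff₀ hVr0]
      nlinarith
    have hlt : 2 * b / (1 + b) < 1 := by
      rw [div_lt_one (by linarith)]
      linarith
    have htend : Tendsto (fun s : ℝ => t ^ (2 * s)) (nhdsWithin 0 (Set.Ioi 0)) (nhds 1) := by
      have h2 : Tendsto (fun s : ℝ => 2 * s) (nhds (0 : ℝ)) (nhds (0 : ℝ)) := by
        simpa using (continuous_mul_left (2 : ℝ)).tendsto (0 : ℝ)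
      have h3 := (Real.continuousAt_const_rpow (a := t) ht0.ne').tendsto.comp h2
      simp only [Function.comp_def, Real.rpow_zero] at h3
      exact h3.mono_left nhdsWithin_le_nhds
    have hev1 : ∀ᶠ s : ℝ in nhdsWithin 0 (Set.Ioi 0), 2 * b / (1 + b) < t ^ (2 * s) :=
      htend.eventually (eventually_gt_nhds hlt)
    have hev2 : ∀ᶠ s in nhdsWithin (0 : ℝ) (Set.Ioi 0), s ∈ Set.Ioi (0 : ℝ) :=
      eventually_mem_nhdsWithin
    filter_upwards [hev1, hev2] with s hs1 hs2
    have hspos : (0 : ℝ) < s := hs2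
    haveI := hσ s hspos
    have hkey := Stmt9Aux.key hN (σ s) hspos ht0
    have hLge : t ^ (2 * s) * ((Vr - 2 ^ N * t) / Vr) ≤ L s := by
      rw [← mul_div_assoc]
      exact (div_le_iff₀ hVr0).mpr hkey
    have h3 : b < t ^ (2 * s) * ((1 + b) / 2) := by
      have hm := mul_lt_mul_of_pos_right hs1 (show (0 : ℝ) < (1 + b) / 2 by linarith)
      calc b = 2 * b / (1 + b) * ((1 + b) / 2) := by field_simp
        _ < t ^ (2 * s) * ((1 + b) / 2) := hm
    have h4 : t ^ (2 * s) * ((1 + b) / 2) ≤ t ^ (2 * s) * ((Vr - 2 ^ N * t) / Vr) :=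
      mul_le_mul_of_nonneg_left hfrac (Real.rpow_nonneg ht0.le _)
    exact lt_of_le_of_lt (le_max_left a (1 / 2)) (lt_of_lt_of_le h3 (h4.trans hLge))
  · intro a ha
    have hev2 : ∀ᶠ s in nhdsWithin (0 : ℝ) (Set.Ioi 0), s ∈ Set.Ioi (0 : ℝ) :=
      eventually_mem_nhdsWithin
    filter_upwards [hev2] with s hs
    have hspos : (0 : ℝ) < s := hs
    haveI := hσ s hspos
    have hle : L s ≤ 1 :=
      ciSup_le fun e => Stmt9Aux.fe_le_one (σ s) hspos.le _
        (mem_sphere_zero_iff_norm.mp e.2).le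
    linarith
end
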